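/- Let f : ℂ → ℂ be meromorphic on all of ℂ (MeromorphicOn f Set.univ) and suppose that the function z ↦ f(z⁻¹) is meromorphic at 0. Then there exist polynomials p, q ∈ ℂ[X] with q ≠ 0 such that the set {z ∈ ℂ : f z ≠ (Polynomial.eval z p) / (Polynomial.eval z q)} is finite. In other words, a scalar function meromorphic on the extended complex plane coincides, off a finite set, with a rational function. -/

import Mathlib

open Set Filter Bornology

/-- An entire function with polynomial growth at infinity is a polynomial. -/
lemma entire_polynomial_growth (n : ℕ) :
    ∀ (g : ℂ → ℂ), Differentiable ℂ g → ∀ (C R : ℝ),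
      (∀ z : ℂ, R ≤ ‖z‖ → ‖g z‖ ≤ C * ‖z‖ ^ n) →
      ∃ p : Polynomial ℂ, ∀ z, g z = p.eval z := by
  induction n with
  | zero =>
    intro g hg C R hb
    have hbd : IsBounded (Set.range g) := by
      have h1 : IsBounded (g '' Metric.closedBall 0 (max R 0)) :=
        ((isCompact_closedBall _ _).image hg.continuous).isBounded
      have h2 : IsBounded (Metric.closedBall (0 : ℂ) C) := Metric.isBounded_closedBall
      apply (h1.union h2).subset
      rintro - ⟨z, rfl⟩
      by_cases hz : ‖z‖ ≤ max R 0
      · exact Or.inl ⟨z, by simpa [Metric.mem_closedBall] using hz, rfl⟩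
      · refine Or.inr ?_
        have := hb z (le_trans (le_max_left _ _) (le_of_not_ge hz))
        simpa [Metric.mem_closedBall] using this
    refine ⟨Polynomial.C (g 0), fun z => ?_⟩
    simpa using hg.apply_eq_apply_of_bounded hbd z 0
  | succ n ih =>
    intro g hg C R hb
    have hder : Differentiable ℂ (dslope g 0) := by
      rw [← differentiableOn_univ]
      exact (Complex.differentiableOn_dslope (Filter.univ_mem)).mpr hg.differentiableOn
    have hb' : ∀ z : ℂ, max R 1 ≤ ‖z‖ →
        ‖dslope g 0 z‖ ≤ (C + ‖g 0‖) * ‖z‖ ^ n := by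
      intro z hz
      have hz1 : (1 : ℝ) ≤ ‖z‖ := le_trans (le_max_right _ _) hz
      have hzR : R ≤ ‖z‖ := le_trans (le_max_left _ _) hz
      have hz0 : z ≠ 0 := by
        intro h; rw [h] at hz1; simp at hz1; linarith
      have hdse : dslope g 0 z = z⁻¹ * (g z - g 0) := by
        rw [dslope_of_ne _ hz0, slope_def_field]
        field_simp
        ring
      have hgz := hb z hzR
      have hn1 : (1 : ℝ) ≤ ‖z‖ ^ n := one_le_pow₀ hz1
      have hpos : (0 : ℝ) < ‖z‖ := by linarith
      calc ‖dslope g 0 z‖ = ‖z‖⁻¹ * ‖g z - g 0‖ := by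
              rw [hdse, norm_mul, norm_inv]
        _ ≤ ‖z‖⁻¹ * (C * ‖z‖ ^ (n + 1) + ‖g 0‖) := by
              apply mul_le_mul_of_nonneg_left _ (by positivity)
              calc ‖g z - g 0‖ ≤ ‖g z‖ + ‖g 0‖ := norm_sub_le _ _
                _ ≤ C * ‖z‖ ^ (n + 1) + ‖g 0‖ := by linarith
        _ = C * ‖z‖ ^ n + ‖z‖⁻¹ * ‖g 0‖ := by
              have hne : ‖z‖ ≠ 0 := ne_of_gt hpos
              have hkey : ‖z‖⁻¹ * (C * ‖z‖ ^ (n + 1)) = C * ‖z‖ ^ n := by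
                calc ‖z‖⁻¹ * (C * ‖z‖ ^ (n + 1))
                    = C * ‖z‖ ^ n * (‖z‖ * ‖z‖⁻¹) := by rw [pow_succ]; ring
                  _ = C * ‖z‖ ^ n := by rw [mul_inv_cancel₀ hne, mul_one]
              rw [mul_add, hkey]
        _ ≤ C * ‖z‖ ^ n + ‖g 0‖ * ‖z‖ ^ n := by
              have h1 : ‖z‖⁻¹ * ‖g 0‖ ≤ 1 * ‖g 0‖ := by
                apply mul_le_mul_of_nonneg_right _ (norm_nonneg _)
                rw [inv_le_one_iff₀]; right; exact hz1
              have h2 : ‖g 0‖ ≤ ‖g 0‖ * ‖z‖ ^ n := by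
                nlinarith [norm_nonneg (g 0)]
              linarith
        _ = (C + ‖g 0‖) * ‖z‖ ^ n := by ring
    obtain ⟨p, hp⟩ := ih (dslope g 0) hder (C + ‖g 0‖) (max R 1) hb'
    refine ⟨Polynomial.C (g 0) + Polynomial.X * p, fun z => ?_⟩
    have hds := sub_smul_dslope g 0 z
    simp only [sub_zero, smul_eq_mul] at hds
    rw [Polynomial.eval_add, Polynomial.eval_C, Polynomial.eval_mul, Polynomial.eval_X,
      ← hp]
    linear_combination -hds

/-- A scalar function meromorphic on the extended complex plane
(i.e. meromorphic on all of `ℂ` and such that `z ↦ f z⁻¹` is meromorphic at `0`)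
coincides, off a finite set, with a rational function `p / q`. -/
theorem meromorphic_on_extended_plane_eq_rational_off_finite
    (f : ℂ → ℂ) (h1 : MeromorphicOn f Set.univ)
    (h2 : MeromorphicAt (fun z : ℂ => f z⁻¹) 0) :
    ∃ p q : Polynomial ℂ, q ≠ 0 ∧
      {z : ℂ | f z ≠ Polynomial.eval z p / Polynomial.eval z q}.Finite := by
  -- Step 1: unpack meromorphy at infinity
  obtain ⟨m, hm⟩ := h2
  set F : ℂ → ℂ := fun z => (z - 0) ^ m • f z⁻¹ with hF
  -- F is analytic near 0 and bounded near 0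
  have hFcont : ContinuousAt F 0 := hm.continuousAt
  obtain ⟨ε, hε, hεan⟩ := Metric.eventually_nhds_iff.mp
    (hm.eventually_analyticAt.and
      (Filter.Tendsto.eventually_lt_const (show ‖F 0‖ < ‖F 0‖ + 1 by linarith) hFcont.norm))
  -- the key representation : f z = z ^ m * F z⁻¹ for z ≠ 0
  have hrep : ∀ z : ℂ, z ≠ 0 → f z = z ^ m * F z⁻¹ := by
    intro z hz
    simp only [hF, sub_zero, smul_eq_mul, inv_inv]
    field_simp
    rw [one_div, inv_pow, mul_assoc, mul_inv_cancel₀ (pow_ne_zero _ hz), mul_one]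
  -- f is analytic outside the ball of radius ε⁻¹
  have hout : ∀ z : ℂ, ε⁻¹ < ‖z‖ → AnalyticAt ℂ f z := by
    intro z hz
    have hz0 : z ≠ 0 := by
      intro h; rw [h] at hz; simp at hz
      exact absurd hz hε.not_gt
    have hzinv : dist z⁻¹ (0 : ℂ) < ε := by
      rw [dist_zero_right, norm_inv]
      exact inv_lt_of_inv_lt₀ hε hz
    have hFan : AnalyticAt ℂ F z⁻¹ := (hεan hzinv).1
    have : AnalyticAt ℂ (fun w : ℂ => w ^ m * F w⁻¹) z := by
      apply AnalyticAt.mul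
      · exact (analyticAt_id.pow m)
      · exact hFan.comp (analyticAt_inv hz0)
    apply this.congr
    filter_upwards [eventually_ne_nhds hz0] with w hw
    exact (hrep w hw).symm
  -- bound on f outside a large ball
  have hbound : ∀ z : ℂ, ε⁻¹ + 1 ≤ ‖z‖ → ‖f z‖ ≤ (‖F 0‖ + 1) * ‖z‖ ^ m := by
    intro z hz
    have hz0 : z ≠ 0 := by
      intro h; rw [h] at hz; simp at hz
      nlinarith [inv_pos.mpr hε]
    have hzinv : dist z⁻¹ (0 : ℂ) < ε := by
      rw [dist_zero_right, norm_inv]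
      exact inv_lt_of_inv_lt₀ hε (by linarith)
    rw [hrep z hz0, norm_mul, norm_pow]
    have := (hεan hzinv).2
    have hFm : ‖F z⁻¹‖ ≤ ‖F 0‖ + 1 := this.le
    calc ‖z‖ ^ m * ‖F z⁻¹‖ ≤ ‖z‖ ^ m * (‖F 0‖ + 1) := by
          apply mul_le_mul_of_nonneg_left hFm (by positivity)
      _ = (‖F 0‖ + 1) * ‖z‖ ^ m := by ring
  -- Step 2 : the set S of non-analytic points is finite
  set S : Set ℂ := {z : ℂ | ¬ AnalyticAt ℂ f z} with hSdef
  have hScd : IsClosed S ∧ DiscreteTopology S := by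
    rw [← isDiscrete_iff_discreteTopology, isClosed_and_discrete_iff]
    intro x
    rw [disjoint_principal_right]
    apply Filter.mem_of_superset ((h1 x (Set.mem_univ x)).eventually_analyticAt)
    intro y hy
    simpa [hSdef] using hy
  have hSsub : S ⊆ Metric.closedBall 0 ε⁻¹ := by
    intro z hz
    rw [Metric.mem_closedBall, dist_zero_right]
    by_contra h
    exact hz (hout z (lt_of_not_ge h))
  have hSfin : S.Finite := by
    have : IsCompact S :=
      (isCompact_closedBall (0:ℂ) ε⁻¹).of_isClosed_subset hScd.1 hSsub
    exact this.finite (isDiscrete_iff_discreteTopology.mpr hScd.2)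
  -- Step 3 : at each point of S pick a pole order
  have hord : ∀ x : ℂ, ∃ k : ℕ, AnalyticAt ℂ (fun z => (z - x) ^ k * f z) x := by
    intro x
    obtain ⟨k, hk⟩ := h1 x (Set.mem_univ x)
    exact ⟨k, by simpa [smul_eq_mul] using hk⟩
  choose nn hnn using hord
  -- the denominator polynomial
  set T : Finset ℂ := hSfin.toFinset with hT
  set q : Polynomial ℂ := ∏ x ∈ T, (Polynomial.X - Polynomial.C x) ^ (nn x) with hq
  have hqne : q ≠ 0 := by
    apply Finset.prod_ne_zero_iff.mpr
    intro x _
    exact pow_ne_zero _ (Polynomial.X_sub_C_ne_zero x)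
  have hqeval : ∀ z : ℂ, q.eval z = ∏ x ∈ T, (z - x) ^ (nn x) := by
    intro z
    simp [hq, Polynomial.eval_prod]
  -- the function g = q * f is entire
  set g : ℂ → ℂ := fun z => q.eval z * f z with hg
  have hgan : ∀ z : ℂ, AnalyticAt ℂ g z := by
    intro z
    by_cases hz : z ∈ S
    · have hzT : z ∈ T := by simpa [hT] using hz
      have h2an : AnalyticAt ℂ (fun w : ℂ =>
          (∏ x ∈ T.erase z, (w - x) ^ (nn x)) * ((w - z) ^ (nn z) * f w)) z := by
        apply AnalyticAt.mul
        · apply Finset.analyticAt_fun_prod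
          intro x _
          exact ((analyticAt_id.sub analyticAt_const).pow _)
        · exact hnn z
      apply h2an.congr
      apply Filter.Eventually.of_forall
      intro w
      rw [hg]
      simp only
      rw [hqeval w, ← Finset.mul_prod_erase T _ hzT]
      ring
    · have hfz : AnalyticAt ℂ f z := not_not.mp hz
      have hqan : AnalyticAt ℂ (fun w : ℂ => q.eval w) z := by
        apply (Finset.analyticAt_fun_prod T
          (fun x _ => ((analyticAt_id.sub analyticAt_const).pow (nn x)))).congr
        exact Filter.Eventually.of_forall fun w => (hqeval w).symm
      exact hqan.mul hfz
  have hgdiff : Differentiable ℂ g := fun z => (hgan z).differentiableAt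
  -- Step 4 : growth bound for g
  obtain ⟨B, hB⟩ : ∃ B : ℝ, ∀ x ∈ T, ‖x‖ ≤ B := by
    obtain ⟨M, hM⟩ := (T.image fun x => ‖x‖).exists_le
    exact ⟨M, fun x hx => hM _ (Finset.mem_image_of_mem _ hx)⟩
  set D : ℕ := ∑ x ∈ T, nn x with hD
  set R₀ : ℝ := max (ε⁻¹ + 1) (max B 1) with hR₀
  have hqbound : ∀ z : ℂ, R₀ ≤ ‖z‖ → ‖q.eval z‖ ≤ 2 ^ D * ‖z‖ ^ D := by
    intro z hz
    have hzB : B ≤ ‖z‖ := le_trans (le_trans (le_max_left _ _) (le_max_right _ _)) hz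
    have hz1 : (1 : ℝ) ≤ ‖z‖ := le_trans (le_trans (le_max_right _ _) (le_max_right _ _)) hz
    rw [hqeval]
    calc ‖∏ x ∈ T, (z - x) ^ nn x‖ = ∏ x ∈ T, ‖z - x‖ ^ nn x := by
          rw [norm_prod]; exact Finset.prod_congr rfl fun x _ => norm_pow _ _
      _ ≤ ∏ x ∈ T, (2 * ‖z‖) ^ nn x := by
          apply Finset.prod_le_prod
          · intro x _; positivity
          · intro x hx
            apply pow_le_pow_left₀ (norm_nonneg _)
            calc ‖z - x‖ ≤ ‖z‖ + ‖x‖ := norm_sub_le _ _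
              _ ≤ ‖z‖ + ‖z‖ := by linarith [hB x hx]
              _ = 2 * ‖z‖ := by ring
      _ = (2 * ‖z‖) ^ D := by rw [Finset.prod_pow_eq_pow_sum]
      _ = 2 ^ D * ‖z‖ ^ D := mul_pow _ _ _
  have hgbound : ∀ z : ℂ, R₀ ≤ ‖z‖ →
      ‖g z‖ ≤ (2 ^ D * (‖F 0‖ + 1)) * ‖z‖ ^ (D + m) := by
    intro z hz
    have hzε : ε⁻¹ + 1 ≤ ‖z‖ := le_trans (le_max_left _ _) hz
    have hfb := hbound z hzε
    have hqb := hqbound z hz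
    have h0 : (0 : ℝ) ≤ ‖F 0‖ + 1 := by positivity
    calc ‖g z‖ = ‖q.eval z‖ * ‖f z‖ := norm_mul _ _
      _ ≤ (2 ^ D * ‖z‖ ^ D) * ((‖F 0‖ + 1) * ‖z‖ ^ m) := by
          apply mul_le_mul hqb hfb (norm_nonneg _) (by positivity)
      _ = (2 ^ D * (‖F 0‖ + 1)) * ‖z‖ ^ (D + m) := by
          rw [pow_add]; ring
  obtain ⟨p, hp⟩ := entire_polynomial_growth (D + m) g hgdiff
    (2 ^ D * (‖F 0‖ + 1)) R₀ hgbound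
  -- Step 5 : conclude
  refine ⟨p, q, hqne, ?_⟩
  apply Set.Finite.subset (Polynomial.finite_setOf_isRoot hqne)
  intro z hz
  simp only [Set.mem_setOf_eq] at hz ⊢
  by_contra hroot
  apply hz
  have hgz : q.eval z * f z = p.eval z := hp z
  rw [Polynomial.IsRoot] at hroot
  rw [eq_div_iff hroot]
  linear_combination hgz
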